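/- The set of nondecreasing substitute valuations on K goods, characterized as the set of v : 2^K → ℝ with v(∅)=0 that are nondecreasing, submodular, and satisfy S3, can be written as a finite union of polyhedrons (finite intersections of closed half-spaces) in ℝ^{2^K}. -/
import Mathlib

def DoubleMax (x y z : ℝ) : Prop :=
  (x = max x (max y z) ∧ y = max x (max y z)) ∨
  (x = max x (max y z) ∧ z = max x (max y z)) ∨
  (y = max x (max y z) ∧ z = max x (max y z))

/-- A polyhedron: a nonempty finite intersection of closed half-spaces. -/
def IsPolyhedron {K : ℕ} (P : Set (Finset (Fin K) → ℝ)) : Prop :=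
  P.Nonempty ∧ ∃ (m : ℕ) (φ : Fin m → ((Finset (Fin K) → ℝ) →ₗ[ℝ] ℝ)) (c : Fin m → ℝ),
    P = {v | ∀ t : Fin m, φ t v ≤ c t}

namespace SubPoly

abbrev V (K : ℕ) := Finset (Fin K) → ℝ

/-- Finite intersection of closed half-spaces (possibly without nonemptiness). -/
def IsFin {K : ℕ} (P : Set (V K)) : Prop :=
  ∃ (m : ℕ) (φ : Fin m → (V K →ₗ[ℝ] ℝ)) (c : Fin m → ℝ),
    P = {v | ∀ t : Fin m, φ t v ≤ c t}

lemma isFin_univ {K : ℕ} : IsFin (Set.univ : Set (V K)) := by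
  refine ⟨0, fun t => 0, fun t => 0, ?_⟩
  ext v
  simp

lemma isFin_halfspace {K : ℕ} (φ : V K →ₗ[ℝ] ℝ) (c : ℝ) :
    IsFin {v : V K | φ v ≤ c} := by
  refine ⟨1, fun _ => φ, fun _ => c, ?_⟩
  ext v
  simp [Fin.forall_fin_one]

lemma isFin_inter {K : ℕ} {P Q : Set (V K)} (hP : IsFin P) (hQ : IsFin Q) :
    IsFin (P ∩ Q) := by
  obtain ⟨m, φ, c, rfl⟩ := hP
  obtain ⟨n, ψ, d, rfl⟩ := hQ
  refine ⟨m + n, Fin.append φ ψ, Fin.append c d, ?_⟩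
  ext v
  simp only [Set.mem_inter_iff, Set.mem_setOf_eq]
  constructor
  · rintro ⟨h1, h2⟩ t
    refine Fin.addCases (fun i => ?_) (fun i => ?_) t
    · simpa [Fin.append_left] using h1 i
    · simpa [Fin.append_right] using h2 i
  · intro h
    refine ⟨fun i => ?_, fun i => ?_⟩
    · simpa [Fin.append_left] using h (Fin.castAdd n i)
    · simpa [Fin.append_right] using h (Fin.natAdd m i)

lemma isFin_iInter {K : ℕ} {ι : Type} [Fintype ι] {P : ι → Set (V K)}
    (h : ∀ i, IsFin (P i)) : IsFin (⋂ i, P i) := by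
  choose m φ c hP using h
  let N := Σ i, Fin (m i)
  let e : Fin (Fintype.card N) ≃ N := (Fintype.equivFin N).symm
  refine ⟨Fintype.card N, fun t => φ (e t).1 (e t).2, fun t => c (e t).1 (e t).2, ?_⟩
  ext v
  simp only [Set.mem_iInter, Set.mem_setOf_eq]
  constructor
  · intro hv t
    have := hv (e t).1
    rw [hP] at this
    exact this (e t).2
  · intro hv i
    rw [hP]
    intro j
    have h2 := hv (e.symm ⟨i, j⟩)
    rwa [Equiv.apply_symm_apply] at h2

noncomputable def ev {K : ℕ} (A : Finset (Fin K)) : V K →ₗ[ℝ] ℝ := LinearMap.proj A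

@[simp] lemma ev_apply {K : ℕ} (A : Finset (Fin K)) (v : V K) : ev A v = v A := rfl

lemma isFin_le {K : ℕ} (a b : V K →ₗ[ℝ] ℝ) : IsFin {v : V K | a v ≤ b v} := by
  have : {v : V K | a v ≤ b v} = {v : V K | (a - b) v ≤ 0} := by
    ext v; simp [sub_nonpos]
  rw [this]
  exact isFin_halfspace _ _

lemma isFin_eq_le {K : ℕ} (a b c : V K →ₗ[ℝ] ℝ) :
    IsFin {v : V K | a v = b v ∧ c v ≤ a v} := by
  have : {v : V K | a v = b v ∧ c v ≤ a v} =
      {v : V K | a v ≤ b v} ∩ ({v : V K | b v ≤ a v} ∩ {v : V K | c v ≤ a v}) := by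
    ext v
    simp only [Set.mem_inter_iff, Set.mem_setOf_eq, le_antisymm_iff]
    tauto
  rw [this]
  exact isFin_inter (isFin_le _ _) (isFin_inter (isFin_le _ _) (isFin_le _ _))

/-- Index type for the S3 triples. -/
abbrev TT (K : ℕ) := Finset (Fin K) × Fin K × Fin K × Fin K

def Cond {K : ℕ} (t : TT K) : Prop :=
  t.2.1 ∉ t.1 ∧ t.2.2.1 ∉ t.1 ∧ t.2.2.2 ∉ t.1 ∧
    t.2.1 ≠ t.2.2.1 ∧ t.2.1 ≠ t.2.2.2 ∧ t.2.2.1 ≠ t.2.2.2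

instance {K : ℕ} (t : TT K) : Decidable (Cond t) := by unfold Cond; infer_instance

noncomputable def xL {K : ℕ} (t : TT K) : V K →ₗ[ℝ] ℝ :=
  ev (insert t.2.1 (insert t.2.2.1 t.1)) + ev (insert t.2.2.2 t.1)

noncomputable def yL {K : ℕ} (t : TT K) : V K →ₗ[ℝ] ℝ :=
  ev (insert t.2.1 (insert t.2.2.2 t.1)) + ev (insert t.2.2.1 t.1)

noncomputable def zL {K : ℕ} (t : TT K) : V K →ₗ[ℝ] ℝ :=
  ev (insert t.2.2.1 (insert t.2.2.2 t.1)) + ev (insert t.2.1 t.1)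

def CaseP (c : Fin 3) (x y z : ℝ) : Prop :=
  if c = 0 then x = y ∧ z ≤ x else if c = 1 then x = z ∧ y ≤ x else y = z ∧ x ≤ y

lemma doubleMax_iff (x y z : ℝ) : DoubleMax x y z ↔ ∃ c : Fin 3, CaseP c x y z := by
  constructor
  · rintro (⟨h1, h2⟩ | ⟨h1, h2⟩ | ⟨h1, h2⟩)
    · exact ⟨0, h1.trans h2.symm, le_trans (le_max_right y z) (le_trans (le_max_right x _) h1.symm.le)⟩
    · exact ⟨1, h1.trans h2.symm, le_trans (le_max_left y z) (le_trans (le_max_right x _) h1.symm.le)⟩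
    · exact ⟨2, h1.trans h2.symm, le_trans (le_max_left x _) h1.symm.le⟩
  · rintro ⟨c, hc⟩
    fin_cases c <;> simp only [CaseP] at hc
    · norm_num at hc
      obtain ⟨h1, h2⟩ := hc
      left
      subst h1
      rw [max_eq_left h2, max_self]
      exact ⟨rfl, rfl⟩
    · norm_num at hc
      obtain ⟨h1, h2⟩ := hc
      right; left
      subst h1
      rw [max_eq_right h2, max_self]
      exact ⟨rfl, rfl⟩
    · norm_num at hc
      obtain ⟨h1, h2⟩ := hc
      right; right
      subst h1
      rw [max_self, max_eq_right h2]
      exact ⟨rfl, rfl⟩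

lemma isFin_caseSet {K : ℕ} (c : Fin 3) (t : TT K) :
    IsFin {v : V K | CaseP c (xL t v) (yL t v) (zL t v)} := by
  fin_cases c <;> simp only [CaseP] <;> norm_num
  · exact isFin_eq_le (xL t) (yL t) (zL t)
  · exact isFin_eq_le (xL t) (zL t) (yL t)
  · exact isFin_eq_le (yL t) (zL t) (xL t)

/-- The polyhedral piece associated with a case selection σ. -/
def Pset {K : ℕ} (σ : TT K → Fin 3) : Set (V K) :=
  {v | v ∅ = 0 ∧
    (∀ A B : Finset (Fin K), A ⊆ B → v A ≤ v B) ∧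
    (∀ A B : Finset (Fin K), v (A ∪ B) + v (A ∩ B) ≤ v A + v B) ∧
    (∀ t : TT K, Cond t → CaseP (σ t) (xL t v) (yL t v) (zL t v))}

lemma zero_mem_Pset {K : ℕ} (σ : TT K → Fin 3) : (0 : V K) ∈ Pset σ := by
  refine ⟨rfl, fun A B _ => le_refl _, fun A B => by simp, fun t _ => ?_⟩
  simp only [map_zero]
  unfold CaseP
  split_ifs <;> simp

lemma isFin_Pset {K : ℕ} (σ : TT K → Fin 3) : IsFin (Pset σ) := by
  classical
  have hdecomp : Pset σ =
      ({v : V K | ev ∅ v ≤ 0} ∩ {v : V K | (-(ev ∅)) v ≤ 0}) ∩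
      ((⋂ p : Finset (Fin K) × Finset (Fin K),
          if p.1 ⊆ p.2 then {v : V K | (ev p.1) v ≤ (ev p.2) v} else Set.univ) ∩
       ((⋂ p : Finset (Fin K) × Finset (Fin K),
          {v : V K | (ev (p.1 ∪ p.2) + ev (p.1 ∩ p.2)) v ≤ (ev p.1 + ev p.2) v}) ∩
        (⋂ t : TT K,
          if Cond t then {v : V K | CaseP (σ t) (xL t v) (yL t v) (zL t v)}
          else Set.univ))) := by
    ext v
    simp only [Pset, Set.mem_setOf_eq, Set.mem_inter_iff, Set.mem_iInter,
      Set.mem_ite_univ_right, LinearMap.neg_apply, LinearMap.add_apply, ev_apply,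
      neg_nonpos, Prod.forall]
    constructor
    · rintro ⟨h0, hm, hs, hc⟩
      refine ⟨⟨le_of_eq h0, le_of_eq h0.symm⟩, fun A B hAB => hm A B hAB,
        fun A B => hs A B, fun t ht => hc t ht⟩
    · rintro ⟨⟨h1, h2⟩, hm, hs, hc⟩
      exact ⟨le_antisymm h1 h2, hm, hs, hc⟩
  rw [hdecomp]
  refine isFin_inter (isFin_inter (isFin_halfspace _ _) (isFin_halfspace _ _))
    (isFin_inter ?_ (isFin_inter ?_ ?_))
  · refine isFin_iInter fun p => ?_
    split_ifs
    · exact isFin_le _ _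
    · exact isFin_univ
  · exact isFin_iInter fun p => isFin_le _ _
  · refine isFin_iInter fun t => ?_
    split_ifs
    · exact isFin_caseSet _ _
    · exact isFin_univ

end SubPoly

theorem substitute_valuations_union_polyhedra (K : ℕ) (hK : 1 ≤ K) :
    ∃ (n : ℕ) (P : Fin n → Set (Finset (Fin K) → ℝ)),
      (∀ a : Fin n, IsPolyhedron (P a)) ∧
      {v : Finset (Fin K) → ℝ |
        v ∅ = 0 ∧
        (∀ A B : Finset (Fin K), A ⊆ B → v A ≤ v B) ∧
        (∀ A B : Finset (Fin K), v (A ∪ B) + v (A ∩ B) ≤ v A + v B) ∧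
        (∀ (A : Finset (Fin K)) (i j k : Fin K),
          i ∉ A → j ∉ A → k ∉ A → i ≠ j → i ≠ k → j ≠ k →
          DoubleMax (v (insert i (insert j A)) + v (insert k A))
                    (v (insert i (insert k A)) + v (insert j A))
                    (v (insert j (insert k A)) + v (insert i A)))} = ⋃ a, P a := by
  classical
  open SubPoly in
  refine ⟨Fintype.card (TT K → Fin 3),
    fun a => Pset ((Fintype.equivFin (TT K → Fin 3)).symm a), fun a => ?_, ?_⟩
  · exact ⟨⟨0, zero_mem_Pset _⟩, isFin_Pset _⟩
  · ext v
    simp only [Set.mem_setOf_eq, Set.mem_iUnion]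
    constructor
    · rintro ⟨h0, hm, hs, hc⟩
      have key : ∀ t : TT K, ∃ c : Fin 3,
          Cond t → CaseP c (xL t v) (yL t v) (zL t v) := by
        intro t
        by_cases ht : Cond t
        · obtain ⟨i1, i2, i3, i4, i5, i6⟩ := ht
          have := hc t.1 t.2.1 t.2.2.1 t.2.2.2 i1 i2 i3 i4 i5 i6
          rw [doubleMax_iff] at this
          obtain ⟨c, hcc⟩ := this
          exact ⟨c, fun _ => by
            simpa only [xL, yL, zL, LinearMap.add_apply, ev_apply] using hcc⟩
        · exact ⟨0, fun h => absurd h ht⟩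
      choose σ hσ using key
      refine ⟨Fintype.equivFin (TT K → Fin 3) σ, ?_⟩
      rw [Equiv.symm_apply_apply]
      exact ⟨h0, hm, hs, hσ⟩
    · rintro ⟨a, h0, hm, hs, hc⟩
      refine ⟨h0, hm, hs, fun A i j k hi hj hk hij hik hjk => ?_⟩
      rw [doubleMax_iff]
      have := hc (A, i, j, k) ⟨hi, hj, hk, hij, hik, hjk⟩
      exact ⟨_, by simpa only [xL, yL, zL, LinearMap.add_apply, ev_apply] using this⟩
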